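/- Let R be a dwindling convergent SRS over a finite alphabet Σ, let α be a nonempty irreducible string, and let W be a minimal-length string satisfying α·W ↔*_R W. For 0 ≤ j ≤ |W|, let α^(j) denote the R-normal form of α·W_[1:j]. Then for every j with 0 ≤ j < |W| we have |α^(j)| > j and W_[j+1] = α^(j)_[j+1]; that is, each successive symbol of a minimal-length solution W is determined as the (j+1)-st symbol of the normal form of α concatenated with the first j symbols of W. -/

import Mathlib

/- Strings over an alphabet `σ` are modelled as `List σ`; a finite string
rewriting system is a finite list of rules `(l, r)`. -/

namespace SRS

variable {σ : Type*}

/-- One-step rewrite relation: `u →_R v`. -/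
def Step (R : List (List σ × List σ)) (u v : List σ) : Prop :=
  ∃ x y l r, (l, r) ∈ R ∧ u = x ++ l ++ y ∧ v = x ++ r ++ y

/-- `u →*_R v`: reflexive-transitive closure. -/
def Reduces (R : List (List σ × List σ)) : List σ → List σ → Prop :=
  Relation.ReflTransGen (Step R)

/-- `u ↔*_R v`: reflexive-symmetric-transitive closure. -/
def Equiv (R : List (List σ × List σ)) : List σ → List σ → Prop :=
  Relation.EqvGen (Step R)

/-- `u ↓_R v`: joinability, i.e. a common reduct exists. -/
def Joins (R : List (List σ × List σ)) : List σ → List σ → Prop :=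
  Relation.Join (Reduces R)

/-- A string is irreducible if no rule applies to it. -/
def Irreducible (R : List (List σ × List σ)) (u : List σ) : Prop :=
  ∀ v, ¬ Step R u v

/-- `u →!_R v`: `v` is an `R`-normal form of `u`. -/
def NormalizesTo (R : List (List σ × List σ)) (u v : List σ) : Prop :=
  Reduces R u v ∧ Irreducible R v

/-- Terminating: no infinite chain of rewrite steps. -/
def Terminating (R : List (List σ × List σ)) : Prop :=
  ¬ ∃ f : ℕ → List σ, ∀ n, Step R (f n) (f (n + 1))

def Confluent (R : List (List σ × List σ)) : Prop :=
  ∀ t s₁ s₂, Reduces R t s₁ → Reduces R t s₂ →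
    ∃ t', Reduces R s₁ t' ∧ Reduces R s₂ t'

def Convergent (R : List (List σ × List σ)) : Prop :=
  Terminating R ∧ Confluent R

/-- Dwindling: every right-hand side is a proper prefix of its left-hand side. -/
def Dwindling (R : List (List σ × List σ)) : Prop :=
  ∀ p ∈ R, p.2 <+: p.1 ∧ p.2 ≠ p.1

/-- Monadic: length-reducing with right-hand sides of length at most 1. -/
def Monadic (R : List (List σ × List σ)) : Prop :=
  ∀ p ∈ R, p.2.length < p.1.length ∧ p.2.length ≤ 1

/-- `MP α`: normal forms of `p ++ s` with `p` a prefix of `α` and `s` a single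
symbol or the empty string. -/
def MP (R : List (List σ × List σ)) (α : List σ) : Set (List σ) :=
  { γ | ∃ p s, p <+: α ∧ s.length ≤ 1 ∧ NormalizesTo R (p ++ s) γ }

end SRS

section Aux

open SRS

variable {σ : Type*} {R : List (List σ × List σ)}

lemma step_append_right {u v : List σ} (h : Step R u v) (s : List σ) :
    Step R (u ++ s) (v ++ s) := by
  obtain ⟨x, y, l, r, hm, rfl, rfl⟩ := h
  exact ⟨x, y ++ s, l, r, hm, by simp, by simp⟩

lemma step_append_left {u v : List σ} (h : Step R u v) (p : List σ) :
    Step R (p ++ u) (p ++ v) := by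
  obtain ⟨x, y, l, r, hm, rfl, rfl⟩ := h
  exact ⟨p ++ x, y, l, r, hm, by simp, by simp⟩

lemma reduces_append_right {u v : List σ} (h : Reduces R u v) (s : List σ) :
    Reduces R (u ++ s) (v ++ s) := by
  induction h with
  | refl => exact Relation.ReflTransGen.refl
  | tail _ hstep ih => exact ih.tail (step_append_right hstep s)

lemma equiv_of_reduces {u v : List σ} (h : Reduces R u v) : Equiv R u v := by
  induction h with
  | refl => exact Relation.EqvGen.refl _
  | tail _ hstep ih => exact ih.trans _ _ _ (Relation.EqvGen.rel _ _ hstep)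

lemma dw_lhs_ne_nil (hdw : Dwindling R) {l r : List σ} (hm : (l, r) ∈ R) : l ≠ [] := by
  intro h
  obtain ⟨hpre, hne⟩ := hdw _ hm
  subst h
  exact hne (List.prefix_nil.mp hpre)

lemma step_length_lt (hdw : Dwindling R) {u v : List σ} (h : Step R u v) :
    v.length < u.length := by
  obtain ⟨x, y, l, r, hm, rfl, rfl⟩ := h
  obtain ⟨hpre, hne⟩ := hdw _ hm
  have hlt : r.length < l.length := by
    rcases Nat.lt_or_ge r.length l.length with h | h
    · exact h
    · exact absurd (hpre.eq_of_length_le h) hne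
  simp only [List.length_append]
  omega

lemma irr_of_prefix {u p : List σ} (hu : Irreducible R u) (hp : p <+: u) :
    Irreducible R p := by
  obtain ⟨s, rfl⟩ := hp
  rintro v ⟨x, y, l, r, hm, rfl, rfl⟩
  exact hu (x ++ r ++ (y ++ s)) ⟨x, y ++ s, l, r, hm, by simp, by simp⟩

lemma reduces_irr_eq {u v : List σ} (hu : Irreducible R u) (h : Reduces R u v) :
    v = u := by
  induction h with
  | refl => rfl
  | tail hred hstep ih => exact absurd (ih ▸ hstep) (hu _)

lemma nf_unique (hc : Confluent R) {u v w : List σ} (hv : NormalizesTo R u v)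
    (hw : NormalizesTo R u w) : v = w := by
  obtain ⟨d, hd1, hd2⟩ := hc u v w hv.1 hw.1
  rw [← reduces_irr_eq hv.2 hd1, ← reduces_irr_eq hw.2 hd2]

lemma exists_nf_aux (hdw : Dwindling R) :
    ∀ n (u : List σ), u.length ≤ n → ∃ v, NormalizesTo R u v := by
  intro n
  induction n with
  | zero =>
    intro u hu
    have : u = [] := List.length_eq_zero_iff.mp (Nat.le_zero.mp hu)
    subst this
    refine ⟨[], Relation.ReflTransGen.refl, ?_⟩
    rintro v ⟨x, y, l, r, hm, he, rfl⟩
    have : l = [] := by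
      have := congrArg List.length he
      simp at this
      exact List.length_eq_zero_iff.mp (by omega)
    exact dw_lhs_ne_nil hdw hm this
  | succ n ih =>
    intro u hu
    by_cases hirr : Irreducible R u
    · exact ⟨u, Relation.ReflTransGen.refl, hirr⟩
    · have hex : ∃ v, Step R u v := by
        by_contra h
        push_neg at h
        exact hirr h
      obtain ⟨v, hv⟩ := hex
      have hlt := step_length_lt hdw hv
      obtain ⟨w, hw1, hw2⟩ := ih v (by omega)
      exact ⟨w, Relation.ReflTransGen.head hv hw1, hw2⟩

lemma exists_nf (hdw : Dwindling R) (u : List σ) : ∃ v, NormalizesTo R u v :=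
  exists_nf_aux hdw u.length u le_rfl

lemma equiv_join (hc : Confluent R) {u v : List σ} (h : Equiv R u v) :
    ∃ d, Reduces R u d ∧ Reduces R v d := by
  induction h with
  | rel a b hab => exact ⟨b, Relation.ReflTransGen.single hab, Relation.ReflTransGen.refl⟩
  | refl a => exact ⟨a, Relation.ReflTransGen.refl, Relation.ReflTransGen.refl⟩
  | symm a b _ ih => exact ⟨ih.choose, ih.choose_spec.2, ih.choose_spec.1⟩
  | trans a b c _ _ ih1 ih2 =>
    obtain ⟨d1, hd1a, hd1b⟩ := ih1
    obtain ⟨d2, hd2b, hd2c⟩ := ih2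
    obtain ⟨e, he1, he2⟩ := hc b d1 d2 hd1b hd2b
    exact ⟨e, hd1a.trans he1, hd2c.trans he2⟩

/-- A single step from `u ++ [a]` with `u` irreducible yields a prefix of `u`. -/
lemma step_snoc_prefix (hdw : Dwindling R) {u : List σ} (hu : Irreducible R u)
    {a : σ} {v : List σ} (h : Step R (u ++ [a]) v) : v <+: u := by
  obtain ⟨x, y, l, r, hm, he, rfl⟩ := h
  obtain ⟨hpre, hne⟩ := hdw _ hm
  have hlne : l ≠ [] := dw_lhs_ne_nil hdw hm
  have hrl : r.length < l.length := by
    rcases Nat.lt_or_ge r.length l.length with h | h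
    · exact h
    · exact absurd (hpre.eq_of_length_le h) hne
  have hy : y = [] := by
    by_contra hyne
    -- then x ++ l is a prefix of u, contradicting irreducibility of u
    have hxl : x ++ l <+: u ++ [a] := ⟨y, he.symm⟩
    have hlen : (x ++ l).length ≤ u.length := by
      have hy1 : 1 ≤ y.length := List.length_pos_iff.mpr hyne
      have h2 := congrArg List.length he
      simp only [List.length_append, List.length_cons, List.length_nil] at h2
      simp only [List.length_append]
      omega
    have hxlu : x ++ l <+: u :=
      List.prefix_of_prefix_length_le hxl (List.prefix_append u [a]) hlen
    obtain ⟨z, hz⟩ := hxlu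
    exact hu (x ++ r ++ z) ⟨x, z, l, r, hm, hz.symm, rfl⟩
  subst hy
  simp only [List.append_nil] at he ⊢
  have hpre2 : x ++ r <+: u ++ [a] := by
    rw [he]
    obtain ⟨t, ht⟩ := hpre
    have ht' : r ++ t = l := ht
    exact ⟨t, by rw [List.append_assoc, ht']⟩
  have hlen2 : (x ++ r).length ≤ u.length := by
    have := congrArg List.length he
    simp only [List.length_append, List.length_cons, List.length_nil] at this
    simp only [List.length_append]
    omega
  exact List.prefix_of_prefix_length_le hpre2 (List.prefix_append u [a]) hlen2

/-- The normal form of `u ++ [a]` with `u` irreducible is a prefix of `u ++ [a]`. -/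
lemma nf_snoc_prefix (hdw : Dwindling R) {u : List σ} (hu : Irreducible R u)
    {a : σ} {v : List σ} (h : Reduces R (u ++ [a]) v) : v <+: u ++ [a] := by
  rcases Relation.ReflTransGen.cases_head h with rfl | ⟨w, hw, hwv⟩
  · exact List.prefix_rfl
  · have hwu : w <+: u := step_snoc_prefix hdw hu hw
    have hwirr : Irreducible R w := irr_of_prefix hu hwu
    rw [reduces_irr_eq hwirr hwv]
    exact hwu.trans (List.prefix_append u [a])

end Aux

/-- For a dwindling convergent SRS `R`, a nonempty irreducible
string `α`, and a minimal-length solution `W` of `α ++ W ↔*_R W`: for every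
`j < |W|`, the normal form `α⁽ʲ⁾` of `α ++ W_[1:j]` has length `> j` and the
`(j+1)`-st symbol of `W` equals the `(j+1)`-st symbol of `α⁽ʲ⁾`. -/
theorem minimal_fixed_point_symbols_determined {σ : Type*} [Fintype σ]
    (R : List (List σ × List σ)) (hdw : SRS.Dwindling R) (hconv : SRS.Convergent R)
    (α : List σ) (hα : α ≠ []) (hαirr : SRS.Irreducible R α)
    (W : List σ) (hW : SRS.Equiv R (α ++ W) W)
    (hmin : ∀ W' : List σ, SRS.Equiv R (α ++ W') W' → W.length ≤ W'.length) :
    ∀ j < W.length, ∀ N : List σ,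
      SRS.NormalizesTo R (α ++ W.take j) N →
      j < N.length ∧ W[j]? = N[j]? := by
  classical
  obtain ⟨hterm, hc⟩ := hconv
  -- W is irreducible
  have hWirr : SRS.Irreducible R W := by
    intro v hv
    have hWv : SRS.Equiv R (α ++ v) v := by
      have h1 : SRS.Equiv R (α ++ v) (α ++ W) :=
        Relation.EqvGen.symm _ _ (Relation.EqvGen.rel _ _ (step_append_left hv α))
      exact (h1.trans _ _ _ hW).trans _ _ _ (Relation.EqvGen.rel _ _ hv)
    have := hmin v hWv
    have := step_length_lt hdw hv
    omega
  -- α ++ W normalizes to W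
  have hNFW : SRS.NormalizesTo R (α ++ W) W := by
    obtain ⟨d, hd1, hd2⟩ := equiv_join hc hW
    rw [reduces_irr_eq hWirr hd2] at hd1
    exact ⟨hd1, hWirr⟩
  -- key downward induction
  have key : ∀ d j, j + d = W.length →
      ∀ M : List σ, SRS.NormalizesTo R (α ++ W.take j) M →
        (j < W.length → W.take (j + 1) <+: M) := by
    intro d
    induction d with
    | zero =>
      intro j hj M hM
      intro hjlt
      omega
    | succ d ih =>
      intro j hj M hM hjlt
      -- the next normal form
      obtain ⟨N', hN'⟩ := exists_nf hdw (α ++ W.take (j + 1))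
      have hIH : W.take (j + 1) <+: N' := by
        rcases Nat.lt_or_ge (j + 1) W.length with h | h
        · have h2 := ih (j + 1) (by omega) N' hN' h
          exact (List.take_prefix_take_left (by omega : j + 1 ≤ j + 1 + 1)).trans h2
        · have hj1 : j + 1 = W.length := by omega
          have : N' = W := by
            apply nf_unique hc hN'
            rw [hj1, List.take_length]
            exact hNFW
          rw [this, hj1, List.take_length]
      -- chain: α ++ W.take (j+1) = (α ++ W.take j) ++ [W[j]]
      have htake : α ++ W.take (j + 1) = (α ++ W.take j) ++ [W[j]] := by
        rw [List.append_assoc]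
        congr 1
        rw [← List.take_concat_get hjlt]
        simp
      -- reduce to M ++ [W[j]]
      have hred : SRS.Reduces R (α ++ W.take (j + 1)) (M ++ [W[j]]) := by
        rw [htake]
        exact reduces_append_right hM.1 [W[j]]
      -- N' is also reachable from M ++ [W[j]]
      have hjoin : SRS.Reduces R (M ++ [W[j]]) N' := by
        obtain ⟨e, he1, he2⟩ := hc (α ++ W.take (j + 1)) (M ++ [W[j]]) N' hred hN'.1
        rwa [reduces_irr_eq hN'.2 he2] at he1
      have hN'pre : N' <+: M ++ [W[j]] := nf_snoc_prefix hdw hM.2 hjoin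
      have hWpre : W.take (j + 1) <+: M ++ [W[j]] := hIH.trans hN'pre
      -- case split on whether it fits inside M
      rcases Nat.lt_or_ge M.length (j + 1) with hlen | hlen
      · -- then M = W.take j, contradiction with minimality
        exfalso
        have hlenW : (W.take (j + 1)).length = j + 1 := by
          rw [List.length_take]; omega
        have hMlen : (M ++ [W[j]]).length ≤ j + 1 := by simp; omega
        have heq : W.take (j + 1) = M ++ [W[j]] := by
          refine List.IsPrefix.eq_of_length_le hWpre ?_
          simp only [List.length_append, List.length_cons, List.length_nil, hlenW]
          omega
        have hMj : M.length = j := by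
          have := congrArg List.length heq
          simp only [List.length_append, List.length_cons, List.length_nil, hlenW] at this
          omega
        have hMeq : M = W.take j := by
          have := congrArg (List.take j) heq
          rw [List.take_take] at this
          simp only [min_def] at this
          rw [if_pos (by omega)] at this
          rw [List.take_append_of_le_length (le_of_eq hMj.symm),
            List.take_of_length_le (le_of_eq hMj)] at this
          exact this.symm
        have hsol : SRS.Equiv R (α ++ W.take j) (W.take j) := by
          have := hM.1
          rw [hMeq] at this
          exact equiv_of_reduces this
        have := hmin _ hsol
        rw [List.length_take] at this
        omega
      · -- W.take (j+1) <+: M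
        exact List.prefix_of_prefix_length_le hWpre (List.prefix_append M [W[j]])
          (by rw [List.length_take]; omega)
  intro j hj N hN
  have hpre : W.take (j + 1) <+: N := key (W.length - j) j (by omega) N hN hj
  have hlen : j + 1 ≤ N.length := by
    have := hpre.length_le
    rw [List.length_take] at this
    omega
  refine ⟨by omega, ?_⟩
  obtain ⟨t, rfl⟩ := hpre
  rw [List.getElem?_append_left (by rw [List.length_take]; omega),
    List.getElem?_take_of_lt (by omega)]
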